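/- Let m ≥ 1, τ > 0, let p be a real number with 1 < p < 2, and let z ∈ ℝ^m with z ≠ 0. Let ᾱ be the unique solution in (0, |z|) of α + τ p α^{p−1} = |z|. Then the point y* = ᾱ · z/|z| is the unique minimizer of y ↦ |y|^p + |z − y|²/(2τ) over ℝ^m. -/

import Mathlib

open Real RealInnerProductSpace

lemma rpow_tangent {p a r : ℝ} (hp : 1 ≤ p) (ha : 0 < a) (hr : 0 ≤ r) :
    a ^ p + p * a ^ (p - 1) * (r - a) ≤ r ^ p := by
  have hs : (-1 : ℝ) ≤ r / a - 1 := by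
    have : 0 ≤ r / a := div_nonneg hr ha.le
    linarith
  have h := one_add_mul_self_le_rpow_one_add hs hp
  have h1 : (1 + (r / a - 1)) = r / a := by ring
  rw [h1, Real.div_rpow hr ha.le] at h
  have hap : (0:ℝ) < a ^ p := Real.rpow_pos_of_pos ha p
  have hpow : a ^ (p - 1) * a = a ^ p := by
    rw [← Real.rpow_add_one ha.ne' (p - 1)]; ring_nf
  have h2 : (1 + p * (r / a - 1)) * a ^ p ≤ r ^ p := by
    calc (1 + p * (r / a - 1)) * a ^ p ≤ (r ^ p / a ^ p) * a ^ p :=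
          mul_le_mul_of_nonneg_right h hap.le
      _ = r ^ p := div_mul_cancel₀ _ hap.ne'
  have h3 : (1 + p * (r / a - 1)) * a ^ p = a ^ p + p * a ^ (p-1) * (r - a) := by
    field_simp
    linear_combination (-(p * (r - a))) * hpow
  linarith [h3 ▸ h2]

theorem prox_rpow_norm_minimizer (m : ℕ) (hm : 1 ≤ m) (τ p : ℝ)
    (hτ : 0 < τ) (hp1 : 1 < p) (hp2 : p < 2)
    (z : EuclideanSpace ℝ (Fin m)) (hz : z ≠ 0)
    (α : ℝ) (hα0 : 0 < α) (hαz : α < ‖z‖)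
    (hαeq : α + τ * p * α ^ (p - 1) = ‖z‖) :
    (∀ y : EuclideanSpace ℝ (Fin m),
        ‖(α / ‖z‖) • z‖ ^ p + ‖z - (α / ‖z‖) • z‖ ^ 2 / (2 * τ)
          ≤ ‖y‖ ^ p + ‖z - y‖ ^ 2 / (2 * τ)) ∧
    (∀ y : EuclideanSpace ℝ (Fin m),
        (∀ w : EuclideanSpace ℝ (Fin m),
          ‖y‖ ^ p + ‖z - y‖ ^ 2 / (2 * τ) ≤ ‖w‖ ^ p + ‖z - w‖ ^ 2 / (2 * τ)) →
        y = (α / ‖z‖) • z) := by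
  have hN : (0:ℝ) < ‖z‖ := norm_pos_iff.mpr hz
  have hystar : ‖(α / ‖z‖) • z‖ = α := by
    rw [norm_smul, Real.norm_eq_abs, abs_of_pos (div_pos hα0 hN)]
    field_simp
  have hsub : z - (α / ‖z‖) • z = (1 - α / ‖z‖) • z := by
    rw [sub_smul, one_smul]
  have hzstar : ‖z - (α / ‖z‖) • z‖ = ‖z‖ - α := by
    rw [hsub, norm_smul, Real.norm_eq_abs, abs_of_pos (by
      rw [sub_pos, div_lt_one hN]; exact hαz)]
    field_simp
  -- key inequality
  have key : ∀ y : EuclideanSpace ℝ (Fin m),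
      α ^ p + (‖z‖ - α) ^ 2 / (2 * τ) + (α - ‖y‖) ^ 2 / (2 * τ)
        + (‖z‖ * ‖y‖ - ⟪z, y⟫) / τ
        ≤ ‖y‖ ^ p + ‖z - y‖ ^ 2 / (2 * τ) := by
    intro y
    have hsq : ‖z - y‖ ^ 2 = ‖z‖ ^ 2 - 2 * ⟪z, y⟫ + ‖y‖ ^ 2 := norm_sub_sq_real z y
    have htan := rpow_tangent hp1.le hα0 (norm_nonneg y)
    rw [hsq]
    rw [← sub_nonneg]
    have hEq : ‖y‖ ^ p + (‖z‖ ^ 2 - 2 * ⟪z, y⟫ + ‖y‖ ^ 2) / (2 * τ)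
        - (α ^ p + (‖z‖ - α) ^ 2 / (2 * τ) + (α - ‖y‖) ^ 2 / (2 * τ)
          + (‖z‖ * ‖y‖ - ⟪z, y⟫) / τ)
        = ‖y‖ ^ p - (α ^ p + p * α ^ (p - 1) * (‖y‖ - α)) := by
      have h := hαeq
      field_simp
      linear_combination (2 * (‖y‖ - α)) * h
    rw [hEq]
    linarith [htan]
  constructor
  · intro y
    have h1 := key y
    have h2 : (0:ℝ) ≤ (α - ‖y‖) ^ 2 / (2 * τ) := by positivity
    have h3 : (0:ℝ) ≤ (‖z‖ * ‖y‖ - ⟪z, y⟫) / τ := by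
      apply div_nonneg _ hτ.le
      linarith [real_inner_le_norm z y]
    rw [hystar, hzstar]
    linarith
  · intro y hy
    have h1 := key y
    have h2 := hy ((α / ‖z‖) • z)
    rw [hystar, hzstar] at h2
    have h3 : (0:ℝ) ≤ (α - ‖y‖) ^ 2 / (2 * τ) := by positivity
    have h4 : (0:ℝ) ≤ (‖z‖ * ‖y‖ - ⟪z, y⟫) / τ := by
      apply div_nonneg _ hτ.le
      linarith [real_inner_le_norm z y]
    have h5 : (α - ‖y‖) ^ 2 / (2 * τ) = 0 := le_antisymm (by linarith) h3
    have h6 : (‖z‖ * ‖y‖ - ⟪z, y⟫) / τ = 0 := le_antisymm (by linarith) h4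
    have hr : ‖y‖ = α := by
      rcases div_eq_zero_iff.mp h5 with h | h
      · have := pow_eq_zero_iff (two_ne_zero) |>.mp h
        linarith
      · linarith
    have hinner : ⟪z, y⟫ = ‖z‖ * ‖y‖ := by
      rcases div_eq_zero_iff.mp h6 with h | h
      · linarith
      · exact absurd h hτ.ne'
    have hcol := inner_eq_norm_mul_iff_real.mp hinner
    -- hcol : ‖y‖ • z = ‖z‖ • y
    rw [hr] at hcol
    have : (‖z‖)⁻¹ • (α • z) = (‖z‖)⁻¹ • (‖z‖ • y) := by rw [hcol]
    rw [smul_smul, smul_smul, inv_mul_cancel₀ hN.ne', one_smul] at this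
    rw [← this, div_eq_inv_mul]
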